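/- For every integer n ≥ 3, the quantity w_n = 9^{3n+2} − (1024n⁴ − 2560n³ + 2752n² + 243)·9^{2n} + (1024n⁴ + 2560n³ + 2752n² + 243)·9^{n} − 81 is strictly positive. -/
import Mathlib

lemma aux_10 (n : ℕ) (hn : 3 ≤ n) :
    1024 * (n : ℝ) ^ 4 - 2560 * n ^ 3 + 2752 * n ^ 2 + 243 < 81 * 9 ^ n := by
  induction n, hn using Nat.le_induction with
  | base => norm_num
  | succ n hn ih =>
    have hn' : (3 : ℝ) ≤ n := by exact_mod_cast hn
    push_cast
    rw [pow_succ (9:ℝ) n]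
    nlinarith [ih, hn', mul_nonneg (sq_nonneg (n:ℝ)) (sq_nonneg (2*(n:ℝ)-3)), sq_nonneg ((n:ℝ)-3)]

theorem stmt_10 (n : ℕ) (hn : 3 ≤ n) :
    0 < (9 : ℝ) ^ (3 * n + 2)
      - (1024 * (n : ℝ) ^ 4 - 2560 * n ^ 3 + 2752 * n ^ 2 + 243) * 9 ^ (2 * n)
      + (1024 * (n : ℝ) ^ 4 + 2560 * n ^ 3 + 2752 * n ^ 2 + 243) * 9 ^ n - 81 := by
  have h := aux_10 n hn
  have hp : (0 : ℝ) < 9 ^ n := by positivity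
  have h1 : (1 : ℝ) ≤ 9 ^ n := one_le_pow₀ (by norm_num)
  have hn' : (3 : ℝ) ≤ n := by exact_mod_cast hn
  have e1 : (9 : ℝ) ^ (3 * n + 2) = 81 * (9 ^ n) ^ 3 := by
    rw [pow_add, ← pow_mul]; norm_num; ring
  have e2 : (9 : ℝ) ^ (2 * n) = (9 ^ n) ^ 2 := by rw [← pow_mul]; ring_nf
  rw [e1, e2]
  have hQ : (0:ℝ) ≤ 1024 * (n:ℝ) ^ 4 + 2560 * n ^ 3 + 2752 * n ^ 2 + 243 := by positivity
  nlinarith [mul_pos (mul_pos hp hp) (sub_pos.mpr h), mul_nonneg hQ (sub_nonneg.mpr h1)]
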